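/- (Variance identities for the empirical risk estimators.) Fix a measurable g : ℝ^d → ℝ and a loss ℓ with ℓ(m) + ℓ(−m) = 1 for all m ∈ ℝ, such that ℓ(g(x)) has finite second moment under p_P, p_N, and p. Let X_P, X_N, X_U be mutually independent i.i.d. samples of sizes n_P, n_N, n_U from p_P, p_N, p respectively, and set ψ_P = θ_P²·σ_P²(g)/n_P, ψ_N = θ_N²·σ_N²(g)/n_N, σ_U²(g) = Var_{x∼p}[ℓ(−g(x))]. Then, over the joint product distribution of the samples: Var[R̂_PN(g)] = ψ_P + ψ_N; for every γ ∈ ℝ, Var[R̂_{N-PUNU}^γ(g)] = 4(1−γ)²·ψ_P + 4γ²·ψ_N + (1−2γ)²·σ_U²(g)/n_U; Var[R̂_{N-PNPU}^γ(g)] = (1+γ)²·ψ_P + (1−γ)²·ψ_N + γ²·σ_U²(g)/n_U; and Var[R̂_{N-PNNU}^γ(g)] = (1−γ)²·ψ_P + (1+γ)²·ψ_N + γ²·σ_U²(g)/n_U. -/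

import Mathlib

open MeasureTheory ProbabilityTheory Finset

section Aux

variable {α : Type*} [MeasurableSpace α] {β : Type*} [MeasurableSpace β]

lemma aux_map_eval {ι : Type*} [Fintype ι] (μ : Measure α) [IsProbabilityMeasure μ] (i : ι) :
    (Measure.pi fun _ : ι => μ).map (Function.eval i) = μ := by
  classical
  apply Measure.ext fun s hs => ?_
  rw [Measure.map_apply (measurable_pi_apply i) hs, ← Set.univ_pi_update_univ,
    Measure.pi_pi]
  rw [Finset.prod_eq_single i]
  · simp
  · intro j _ hj; simp [Function.update_of_ne hj]
  · simp

lemma aux_mp_eval {ι : Type*} [Fintype ι] (μ : Measure α) [IsProbabilityMeasure μ] (i : ι) :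
    MeasurePreserving (Function.eval i) (Measure.pi fun _ : ι => μ) μ :=
  ⟨measurable_pi_apply i, aux_map_eval μ i⟩

lemma aux_iIndep_eval {ι : Type*} [Fintype ι] (μ : Measure α) [IsProbabilityMeasure μ] :
    iIndepFun (fun i => Function.eval i)
      (Measure.pi fun _ : ι => μ) := by
  classical
  rw [iIndepFun_iff_measure_inter_preimage_eq_mul]
  intro S sets hsets
  have h1 : (⋂ i ∈ S, Function.eval i ⁻¹' sets i) = Set.pi (↑S) sets := (Set.pi_def _ _).symm
  rw [h1, ← Set.univ_pi_ite, Measure.pi_pi]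
  have : ∀ j : ι, μ (if j ∈ (↑S : Set ι) then sets j else Set.univ)
      = if j ∈ S then μ (sets j) else 1 := by
    intro j; by_cases hj : j ∈ S <;> simp [hj]
  rw [Finset.prod_congr rfl fun j _ => this j, Finset.prod_ite_mem, Finset.univ_inter]
  refine Finset.prod_congr rfl fun j hj => ?_
  rw [← Measure.map_apply (measurable_pi_apply j) (hsets j hj), aux_map_eval]

lemma aux_mean_memLp (μ : Measure α) [IsProbabilityMeasure μ] {f : α → ℝ}
    (hf2 : MemLp f 2 μ) (n : ℕ) :
    MemLp (fun ω : Fin n → α => (1/(n:ℝ)) * ∑ i, f (ω i)) 2 (Measure.pi fun _ : Fin n => μ) := by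
  have : (fun ω : Fin n → α => ∑ i, f (ω i)) = ∑ i : Fin n, fun ω => f (ω i) := by
    funext ω; simp
  refine MemLp.const_mul ?_ _
  rw [this]
  exact memLp_finset_sum' _ fun i _ => hf2.comp_measurePreserving (aux_mp_eval μ i)

lemma aux_var_mean (μ : Measure α) [IsProbabilityMeasure μ] {f : α → ℝ}
    (hf : Measurable f) (hf2 : MemLp f 2 μ) (n : ℕ) (hn : 0 < n) :
    variance (fun ω : Fin n → α => (1/(n:ℝ)) * ∑ i, f (ω i)) (Measure.pi fun _ : Fin n => μ)
      = variance f μ / n := by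
  set π : Measure (Fin n → α) := Measure.pi fun _ : Fin n => μ with hπ
  have hident : ∀ i : Fin n, IdentDistrib (fun ω : Fin n → α => f (ω i)) f π μ := fun i =>
    ⟨(hf.comp (measurable_pi_apply i)).aemeasurable, hf.aemeasurable, by
      rw [show (fun ω : Fin n → α => f (ω i)) = f ∘ Function.eval i from rfl,
        ← Measure.map_map hf (measurable_pi_apply i), aux_map_eval]⟩
  have hmem : ∀ i : Fin n, MemLp (fun ω : Fin n → α => f (ω i)) 2 π := fun i =>
    hf2.comp_measurePreserving (aux_mp_eval μ i)
  have hsum : variance (∑ i : Fin n, fun ω : Fin n → α => f (ω i)) π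
      = ∑ i : Fin n, variance (fun ω : Fin n → α => f (ω i)) π := by
    refine IndepFun.variance_sum (fun i _ => hmem i) ?_
    intro i _ j _ hij
    exact ((aux_iIndep_eval μ).comp (fun _ => f) (fun _ => hf)).indepFun hij
  have h1 : (fun ω : Fin n → α => (1/(n:ℝ)) * ∑ i, f (ω i))
      = (1/(n:ℝ)) • (∑ i : Fin n, fun ω : Fin n → α => f (ω i)) := by
    funext ω; simp [mul_comm]
  rw [h1, variance_smul, hsum]
  have h2 : ∀ i : Fin n, variance (fun ω : Fin n → α => f (ω i)) π = variance f μ := fun i =>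
    (hident i).variance_eq
  rw [Finset.sum_congr rfl fun i _ => h2 i, Finset.sum_const, Finset.card_univ, Fintype.card_fin]
  have hn' : (n:ℝ) ≠ 0 := Nat.cast_ne_zero.2 hn.ne'
  field_simp
  ring

lemma aux_var_prod (μ : Measure α) (ν : Measure β) [IsProbabilityMeasure μ]
    [IsProbabilityMeasure ν] {X : α → ℝ} {Y : β → ℝ}
    (hX : Measurable X) (hY : Measurable Y) (hX2 : MemLp X 2 μ) (hY2 : MemLp Y 2 ν) :
    variance (fun ω : α × β => X ω.1 + Y ω.2) (μ.prod ν) = variance X μ + variance Y ν := by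
  have hmpf : MeasurePreserving Prod.fst (μ.prod ν) μ :=
    ⟨measurable_fst, by simp [Measure.map_fst_prod]⟩
  have hmps : MeasurePreserving Prod.snd (μ.prod ν) ν :=
    ⟨measurable_snd, by simp [Measure.map_snd_prod]⟩
  have hindep : IndepFun (fun ω : α × β => X ω.1) (fun ω : α × β => Y ω.2) (μ.prod ν) := by
    rw [indepFun_iff_measure_inter_preimage_eq_mul]
    intro s t hs ht
    have h1 : (fun ω : α × β => X ω.1) ⁻¹' s = (X ⁻¹' s) ×ˢ Set.univ := by
      ext ω; simp
    have h2 : (fun ω : α × β => Y ω.2) ⁻¹' t = Set.univ ×ˢ (Y ⁻¹' t) := by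
      ext ω; simp
    rw [h1, h2, Set.prod_inter_prod, Set.inter_univ, Set.univ_inter,
      Measure.prod_prod, Measure.prod_prod, Measure.prod_prod]
    simp only [measure_univ]
    ring
  have memX : MemLp (fun ω : α × β => X ω.1) 2 (μ.prod ν) := hX2.comp_measurePreserving hmpf
  have memY : MemLp (fun ω : α × β => Y ω.2) 2 (μ.prod ν) := hY2.comp_measurePreserving hmps
  have := hindep.variance_add memX memY
  rw [show (fun ω : α × β => X ω.1 + Y ω.2)
      = (fun ω : α × β => X ω.1) + (fun ω : α × β => Y ω.2) from rfl, this]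
  congr 1
  · exact IdentDistrib.variance_eq ⟨(hX.comp measurable_fst).aemeasurable, hX.aemeasurable, by
      rw [show (fun ω : α × β => X ω.1) = X ∘ Prod.fst from rfl,
        ← Measure.map_map hX measurable_fst, hmpf.map_eq]⟩
  · exact IdentDistrib.variance_eq ⟨(hY.comp measurable_snd).aemeasurable, hY.aemeasurable, by
      rw [show (fun ω : α × β => Y ω.2) = Y ∘ Prod.snd from rfl,
        ← Measure.map_map hY measurable_snd, hmps.map_eq]⟩

lemma aux_var_add_const (μ : Measure α) [IsProbabilityMeasure μ] {X : α → ℝ}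
    (hX : Integrable X μ) (c : ℝ) :
    variance (fun ω => X ω + c) μ = variance X μ := by
  rw [variance, variance, evariance, evariance]
  have h : μ[fun ω => X ω + c] = μ[X] + c := by
    rw [integral_add hX (integrable_const c), integral_const]; simp
  congr 1
  refine lintegral_congr fun ω => ?_
  rw [h]
  congr 2
  ring

end Aux

/-- Variance identities for the empirical PN, non-convex PUNU, PNPU, and PNNU
risk estimators over the joint product distribution of the samples. -/
theorem stmt16 {d : ℕ} (pP pN : Measure (Fin d → ℝ))
    [IsProbabilityMeasure pP] [IsProbabilityMeasure pN]
    (θP θN : ℝ) (hθP : θP ∈ Set.Ioo (0:ℝ) 1) (hθN : θN = 1 - θP)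
    (p : Measure (Fin d → ℝ)) [IsProbabilityMeasure p]
    (hp : p = ENNReal.ofReal θP • pP + ENNReal.ofReal θN • pN)
    (g : (Fin d → ℝ) → ℝ) (hg : Measurable g)
    (ℓ : ℝ → ℝ) (hℓ : Measurable ℓ)
    (hsym : ∀ m : ℝ, ℓ m + ℓ (-m) = 1)
    (hP2 : MemLp (fun x => ℓ (g x)) 2 pP)
    (hN2 : MemLp (fun x => ℓ (g x)) 2 pN)
    (hU2 : MemLp (fun x => ℓ (g x)) 2 p)
    (nP nN nU : ℕ) (hnP : 0 < nP) (hnN : 0 < nN) (hnU : 0 < nU) :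
    let P := ((Measure.pi (fun _ : Fin nP => pP)).prod
      ((Measure.pi (fun _ : Fin nN => pN)).prod
        (Measure.pi (fun _ : Fin nU => p))))
    let ψP := θP^2 * variance (fun x => ℓ (g x)) pP / nP
    let ψN := θN^2 * variance (fun x => ℓ (-g x)) pN / nN
    let σU2 := variance (fun x => ℓ (-g x)) p
    let hatRP : (Fin nP → (Fin d → ℝ)) × (Fin nN → (Fin d → ℝ)) × (Fin nU → (Fin d → ℝ)) → ℝ :=
      fun ω => (1/(nP:ℝ)) * ∑ i, ℓ (g (ω.1 i))
    let hatRN : (Fin nP → (Fin d → ℝ)) × (Fin nN → (Fin d → ℝ)) × (Fin nU → (Fin d → ℝ)) → ℝ :=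
      fun ω => (1/(nN:ℝ)) * ∑ i, ℓ (-g (ω.2.1 i))
    let hatRUP : (Fin nP → (Fin d → ℝ)) × (Fin nN → (Fin d → ℝ)) × (Fin nU → (Fin d → ℝ)) → ℝ :=
      fun ω => (1/(nU:ℝ)) * ∑ i, ℓ (g (ω.2.2 i))
    let hatRUN : (Fin nP → (Fin d → ℝ)) × (Fin nN → (Fin d → ℝ)) × (Fin nU → (Fin d → ℝ)) → ℝ :=
      fun ω => (1/(nU:ℝ)) * ∑ i, ℓ (-g (ω.2.2 i))
    variance (fun ω => θP * hatRP ω + θN * hatRN ω) P = ψP + ψN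
    ∧ (∀ γ : ℝ,
        variance (fun ω => 2*(1-γ)*θP * hatRP ω + 2*γ*θN * hatRN ω
            + (1-γ) * hatRUN ω + γ * hatRUP ω - (1-γ)*θP - γ*θN) P
          = 4*(1-γ)^2 * ψP + 4*γ^2 * ψN + (1-2*γ)^2 * σU2 / nU)
    ∧ (∀ γ : ℝ,
        variance (fun ω => (1-γ) * (θP * hatRP ω + θN * hatRN ω)
            + γ * (2*θP * hatRP ω + hatRUN ω - θP)) P
          = (1+γ)^2 * ψP + (1-γ)^2 * ψN + γ^2 * σU2 / nU)
    ∧ (∀ γ : ℝ,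
        variance (fun ω => (1-γ) * (θP * hatRP ω + θN * hatRN ω)
            + γ * (2*θN * hatRN ω + hatRUP ω - θN)) P
          = (1-γ)^2 * ψP + (1+γ)^2 * ψN + γ^2 * σU2 / nU) := by
  intro P ψP ψN σU2 hatRP hatRN hatRUP hatRUN
  have hfP : Measurable (fun x : Fin d → ℝ => ℓ (g x)) := hℓ.comp hg
  have hfN : Measurable (fun x : Fin d → ℝ => ℓ (-g x)) := hℓ.comp hg.neg
  have hflip : ∀ x : Fin d → ℝ, ℓ (-g x) = 1 - ℓ (g x) := fun x => by
    have := hsym (g x); linarith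
  have hN2' : MemLp (fun x : Fin d → ℝ => ℓ (-g x)) 2 pN := by
    have he : (fun x : Fin d → ℝ => ℓ (-g x)) = fun x => (1:ℝ) - ℓ (g x) := funext hflip
    rw [he]; exact (memLp_const 1).sub hN2
  have hU2' : MemLp (fun x : Fin d → ℝ => ℓ (-g x)) 2 p := by
    have he : (fun x : Fin d → ℝ => ℓ (-g x)) = fun x => (1:ℝ) - ℓ (g x) := funext hflip
    rw [he]; exact (memLp_const 1).sub hU2
  set πP : Measure (Fin nP → (Fin d → ℝ)) := Measure.pi fun _ => pP with hπP
  set πN : Measure (Fin nN → (Fin d → ℝ)) := Measure.pi fun _ => pN with hπN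
  set πU : Measure (Fin nU → (Fin d → ℝ)) := Measure.pi fun _ => p with hπU
  have mSP : Measurable (fun v : Fin nP → (Fin d → ℝ) => (1/(nP:ℝ)) * ∑ i, ℓ (g (v i))) :=
    measurable_const.mul (Finset.measurable_sum _ fun i _ => hfP.comp (measurable_pi_apply i))
  have mSN : Measurable (fun v : Fin nN → (Fin d → ℝ) => (1/(nN:ℝ)) * ∑ i, ℓ (-g (v i))) :=
    measurable_const.mul (Finset.measurable_sum _ fun i _ => hfN.comp (measurable_pi_apply i))
  have mSU : Measurable (fun v : Fin nU → (Fin d → ℝ) => (1/(nU:ℝ)) * ∑ i, ℓ (-g (v i))) :=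
    measurable_const.mul (Finset.measurable_sum _ fun i _ => hfN.comp (measurable_pi_apply i))
  have memSP : MemLp (fun v : Fin nP → (Fin d → ℝ) => (1/(nP:ℝ)) * ∑ i, ℓ (g (v i))) 2 πP :=
    aux_mean_memLp pP hP2 nP
  have memSN : MemLp (fun v : Fin nN → (Fin d → ℝ) => (1/(nN:ℝ)) * ∑ i, ℓ (-g (v i))) 2 πN :=
    aux_mean_memLp pN hN2' nN
  have memSU : MemLp (fun v : Fin nU → (Fin d → ℝ) => (1/(nU:ℝ)) * ∑ i, ℓ (-g (v i))) 2 πU :=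
    aux_mean_memLp p hU2' nU
  have mpP1 : MeasurePreserving Prod.fst P πP :=
    ⟨measurable_fst, by simp [P, Measure.map_fst_prod]; rfl⟩
  have mpP2 : MeasurePreserving Prod.snd P (πN.prod πU) :=
    ⟨measurable_snd, by simp [P, Measure.map_snd_prod]; rfl⟩
  have mpNf : MeasurePreserving Prod.fst (πN.prod πU) πN :=
    ⟨measurable_fst, by simp [Measure.map_fst_prod]⟩
  have mpUs : MeasurePreserving Prod.snd (πN.prod πU) πU :=
    ⟨measurable_snd, by simp [Measure.map_snd_prod]⟩
  have mpN : MeasurePreserving (fun ω : (Fin nP → (Fin d → ℝ)) × (Fin nN → (Fin d → ℝ)) ×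
      (Fin nU → (Fin d → ℝ)) => ω.2.1) P πN := mpNf.comp mpP2
  have mpU : MeasurePreserving (fun ω : (Fin nP → (Fin d → ℝ)) × (Fin nN → (Fin d → ℝ)) ×
      (Fin nU → (Fin d → ℝ)) => ω.2.2) P πU := mpUs.comp mpP2
  -- the key variance computation
  have key : ∀ a b c k : ℝ,
      variance (fun ω => a * hatRP ω + (b * hatRN ω + c * hatRUN ω) + k) P
        = a^2 * (variance (fun x => ℓ (g x)) pP / nP)
          + b^2 * (variance (fun x => ℓ (-g x)) pN / nN)
          + c^2 * (variance (fun x => ℓ (-g x)) p / nU) := by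
    intro a b c k
    have hint : Integrable (fun ω => a * hatRP ω + (b * hatRN ω + c * hatRUN ω)) P := by
      have m1 : MemLp (fun ω => a * hatRP ω) 2 P :=
        (memSP.comp_measurePreserving mpP1).const_mul a
      have m2 : MemLp (fun ω => b * hatRN ω) 2 P :=
        (memSN.comp_measurePreserving mpN).const_mul b
      have m3 : MemLp (fun ω => c * hatRUN ω) 2 P :=
        (memSU.comp_measurePreserving mpU).const_mul c
      exact (m1.add (m2.add m3)).integrable one_le_two
    refine (aux_var_add_const P hint k).trans ?_
    have h2 := aux_var_prod πP (πN.prod πU)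
      (X := fun v : Fin nP → (Fin d → ℝ) => a * ((1/(nP:ℝ)) * ∑ i, ℓ (g (v i))))
      (Y := fun w : (Fin nN → (Fin d → ℝ)) × (Fin nU → (Fin d → ℝ)) =>
        b * ((1/(nN:ℝ)) * ∑ i, ℓ (-g (w.1 i))) + c * ((1/(nU:ℝ)) * ∑ i, ℓ (-g (w.2 i))))
      (measurable_const.mul mSP)
      ((measurable_const.mul (mSN.comp measurable_fst)).add
        (measurable_const.mul (mSU.comp measurable_snd)))
      (memSP.const_mul a)
      (((memSN.comp_measurePreserving mpNf).const_mul b).add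
        ((memSU.comp_measurePreserving mpUs).const_mul c))
    refine h2.trans ?_
    have h3 := aux_var_prod πN πU
      (X := fun v : Fin nN → (Fin d → ℝ) => b * ((1/(nN:ℝ)) * ∑ i, ℓ (-g (v i))))
      (Y := fun v : Fin nU → (Fin d → ℝ) => c * ((1/(nU:ℝ)) * ∑ i, ℓ (-g (v i))))
      (measurable_const.mul mSN) (measurable_const.mul mSU)
      (memSN.const_mul b) (memSU.const_mul c)
    have vSP : variance (fun v : Fin nP → (Fin d → ℝ) =>
        a * ((1/(nP:ℝ)) * ∑ i, ℓ (g (v i)))) πP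
        = a^2 * (variance (fun x => ℓ (g x)) pP / nP) := by
      rw [hπP, variance_const_mul, aux_var_mean pP hfP hP2 nP hnP]
    have vSN : variance (fun v : Fin nN → (Fin d → ℝ) =>
        b * ((1/(nN:ℝ)) * ∑ i, ℓ (-g (v i)))) πN
        = b^2 * (variance (fun x => ℓ (-g x)) pN / nN) := by
      rw [hπN, variance_const_mul, aux_var_mean pN hfN hN2' nN hnN]
    have vSU : variance (fun v : Fin nU → (Fin d → ℝ) =>
        c * ((1/(nU:ℝ)) * ∑ i, ℓ (-g (v i)))) πU
        = c^2 * (variance (fun x => ℓ (-g x)) p / nU) := by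
      rw [hπU, variance_const_mul, aux_var_mean p hfN hU2' nU hnU]
    rw [h3, vSP, vSN, vSU]
    ring
  have hRUPeq : ∀ ω, hatRUP ω = 1 - hatRUN ω := by
    intro ω
    have hterm : ∀ i : Fin nU, ℓ (g (ω.2.2 i)) = 1 - ℓ (-g (ω.2.2 i)) := fun i => by
      have := hsym (g (ω.2.2 i)); linarith
    show (1/(nU:ℝ)) * ∑ i, ℓ (g (ω.2.2 i)) = 1 - (1/(nU:ℝ)) * ∑ i, ℓ (-g (ω.2.2 i))
    rw [Finset.sum_congr rfl fun i _ => hterm i, Finset.sum_sub_distrib, Finset.sum_const,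
      Finset.card_univ, Fintype.card_fin]
    have hnU' : (nU:ℝ) ≠ 0 := Nat.cast_ne_zero.2 hnU.ne'
    field_simp
    rw [nsmul_eq_mul, mul_one]
  have hnUne : (nU:ℝ) ≠ 0 := Nat.cast_ne_zero.2 hnU.ne'
  refine ⟨?_, ?_, ?_, ?_⟩
  · calc variance (fun ω => θP * hatRP ω + θN * hatRN ω) P
        = variance (fun ω => θP * hatRP ω + (θN * hatRN ω + 0 * hatRUN ω) + 0) P := by
          congr 1; funext ω; ring
      _ = _ := key θP θN 0 0
      _ = ψP + ψN := by simp only [ψP, ψN]; ring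
  · intro γ
    calc variance (fun ω => 2*(1-γ)*θP * hatRP ω + 2*γ*θN * hatRN ω
            + (1-γ) * hatRUN ω + γ * hatRUP ω - (1-γ)*θP - γ*θN) P
        = variance (fun ω => (2*(1-γ)*θP) * hatRP ω + ((2*γ*θN) * hatRN ω
            + (1-2*γ) * hatRUN ω) + (γ - (1-γ)*θP - γ*θN)) P := by
          congr 1; funext ω; rw [hRUPeq ω]; ring
      _ = _ := key (2*(1-γ)*θP) (2*γ*θN) (1-2*γ) (γ - (1-γ)*θP - γ*θN)
      _ = 4*(1-γ)^2 * ψP + 4*γ^2 * ψN + (1-2*γ)^2 * σU2 / nU := by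
          simp only [ψP, ψN, σU2]; ring
  · intro γ
    calc variance (fun ω => (1-γ) * (θP * hatRP ω + θN * hatRN ω)
            + γ * (2*θP * hatRP ω + hatRUN ω - θP)) P
        = variance (fun ω => ((1+γ)*θP) * hatRP ω + (((1-γ)*θN) * hatRN ω
            + γ * hatRUN ω) + (-(γ*θP))) P := by
          congr 1; funext ω; ring
      _ = _ := key ((1+γ)*θP) ((1-γ)*θN) γ (-(γ*θP))
      _ = (1+γ)^2 * ψP + (1-γ)^2 * ψN + γ^2 * σU2 / nU := by
          simp only [ψP, ψN, σU2]; ring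
  · intro γ
    calc variance (fun ω => (1-γ) * (θP * hatRP ω + θN * hatRN ω)
            + γ * (2*θN * hatRN ω + hatRUP ω - θN)) P
        = variance (fun ω => ((1-γ)*θP) * hatRP ω + (((1+γ)*θN) * hatRN ω
            + (-γ) * hatRUN ω) + (γ - γ*θN)) P := by
          congr 1; funext ω; rw [hRUPeq ω]; ring
      _ = _ := key ((1-γ)*θP) ((1+γ)*θN) (-γ) (γ - γ*θN)
      _ = (1-γ)^2 * ψP + (1+γ)^2 * ψN + γ^2 * σU2 / nU := by
          simp only [ψP, ψN, σU2]; ring
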